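/- For every integer j ≥ 1, every integer n with 1−j ≤ n ≤ j−1, and every integer x with 0 ≤ x ≤ j−1, the symmetric Krawtchouk polynomials satisfy the difference equation j(2j−1)·K_{j+n}(2(x+1); 1/2, 2j) = −(x+1)(2x+1)·K_{j+n−1}(2x; 1/2, 2(j−1)) + (j−x−1)(2j−2x−3)·K_{j+n−1}(2(x+1); 1/2, 2(j−1)). -/

import Mathlib

/-- The Pochhammer symbol `(a)_k = a (a+1) ⋯ (a+k-1)`. -/
noncomputable def poch (a : ℝ) (k : ℕ) : ℝ := ∏ i ∈ Finset.range k, (a + i)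

/-- The Krawtchouk polynomial `K_n(x; p, N)` defined by the terminating
hypergeometric sum `∑_{k=0}^n (−n)_k (−x)_k / ((−N)_k k!) · (1/p)^k`. -/
noncomputable def kraw (n : ℕ) (x : ℝ) (p : ℝ) (N : ℕ) : ℝ :=
  ∑ k ∈ Finset.range (n + 1),
    poch (-(n : ℝ)) k * poch (-x) k / (poch (-(N : ℝ)) k * (Nat.factorial k : ℝ)) * (1 / p) ^ k

lemma poch_succ (a : ℝ) (k : ℕ) : poch a (k+1) = poch a k * (a + k) := by
  simp [poch, Finset.prod_range_succ]

lemma poch_succ' (a : ℝ) (k : ℕ) : poch a (k+1) = a * poch (a+1) k := by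
  rw [poch, Finset.prod_range_succ', poch]
  have h : ∀ i ∈ Finset.range k, (a + ((i+1 : ℕ) : ℝ)) = ((a+1) + i) := by
    intro i _; push_cast; ring
  rw [Finset.prod_congr rfl h]
  push_cast
  ring

lemma poch_shift2 (a : ℝ) (k : ℕ) :
    a * (a+1) * poch (a+2) k = poch a k * (a + k) * (a + k + 1) := by
  have h1 : poch a (k+2) = poch a k * (a + k) * (a + k + 1) := by
    rw [poch_succ, poch_succ]; push_cast; ring
  have h2 : poch a (k+2) = a * (a+1) * poch (a+2) k := by
    rw [poch_succ', poch_succ']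
    rw [show a + 1 + 1 = a + 2 from by ring]
    ring
  linear_combination h1 - h2

lemma poch_neg_nat_ne_zero (N k : ℕ) (h : k ≤ N) : poch (-(N:ℝ)) k ≠ 0 := by
  rw [poch]
  apply Finset.prod_ne_zero_iff.mpr
  intro i hi
  rw [Finset.mem_range] at hi
  have hiN : i < N := lt_of_lt_of_le hi h
  have : (i : ℝ) < (N : ℝ) := by exact_mod_cast hiN
  intro hzero
  linarith

/-- Term of the LHS sum. -/
noncomputable def uu (M J : ℕ) (y : ℝ) (k : ℕ) : ℝ :=
  poch (-(M:ℝ)) k * poch (-y) k / (poch (-(2*(J:ℝ))) k * (Nat.factorial k : ℝ)) * 2^k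

/-- Term of the RHS sum. -/
noncomputable def rr (M J : ℕ) (y : ℝ) (k : ℕ) : ℝ :=
  (-(y/2)*(y-1)) * (poch (-((M:ℝ)-1)) k * poch (-(y-2)) k /
      (poch (-(2*(J:ℝ)-2)) k * (Nat.factorial k : ℝ)) * 2^k)
  + ((J:ℝ)-y/2)*(2*(J:ℝ)-y-1) * (poch (-((M:ℝ)-1)) k * poch (-y) k /
      (poch (-(2*(J:ℝ)-2)) k * (Nat.factorial k : ℝ)) * 2^k)

set_option maxHeartbeats 2000000 in
lemma tele_lemma (J M k : ℕ) (y : ℝ) (hM1 : 1 ≤ M) (hk : k < M) (hM2 : M + 1 ≤ 2*J) :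
    (M:ℝ) * (((J:ℝ)*(2*(J:ℝ)-1)) * uu M J y k - rr M J y k)
      = (J:ℝ)*(2*(J:ℝ)-1)*(k:ℝ)*(uu M J y k)
        - (J:ℝ)*(2*(J:ℝ)-1)*((k:ℝ)+1)*(uu M J y (k+1)) := by
  have hJ1 : 1 ≤ J := by omega
  have hJR : (1:ℝ) ≤ (J:ℝ) := by exact_mod_cast hJ1
  have hMc : (M:ℝ) ≠ 0 := by
    have : (1:ℝ) ≤ (M:ℝ) := by exact_mod_cast hM1
    linarith
  -- nonzero denominators
  have hQ : poch (-(2*(J:ℝ))) k ≠ 0 := by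
    have h := poch_neg_nat_ne_zero (2*J) k (by omega)
    have hc : ((2*J : ℕ) : ℝ) = 2*(J:ℝ) := by push_cast; ring
    rwa [hc] at h
  have hQ1 : poch (-(2*(J:ℝ))) (k+1) ≠ 0 := by
    have h := poch_neg_nat_ne_zero (2*J) (k+1) (by omega)
    have hc : ((2*J : ℕ) : ℝ) = 2*(J:ℝ) := by push_cast; ring
    rwa [hc] at h
  have hD : poch (-(2*(J:ℝ)-2)) k ≠ 0 := by
    have h := poch_neg_nat_ne_zero (2*J-2) k (by omega)
    have hc : ((2*J-2 : ℕ) : ℝ) = 2*(J:ℝ)-2 := by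
      rw [Nat.cast_sub (by omega : 2 ≤ 2*J)]; push_cast; ring
    rwa [hc] at h
  have hf : ((Nat.factorial k : ℕ) : ℝ) ≠ 0 := by
    exact_mod_cast (Nat.factorial_ne_zero k)
  have hJJ : (2*(J:ℝ))*(2*(J:ℝ)-1) ≠ 0 := by nlinarith
  -- relations
  have e4 : ((Nat.factorial (k+1) : ℕ) : ℝ) = ((Nat.factorial k : ℕ) : ℝ) * ((k:ℝ)+1) := by
    rw [Nat.factorial_succ]; push_cast; ring
  have eS : poch (-((M:ℝ)-1)) k = poch (-(M:ℝ)) k * (-(M:ℝ) + k) / (-(M:ℝ)) := by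
    have h1 := poch_succ (-(M:ℝ)) k
    have h2 := poch_succ' (-(M:ℝ)) k
    rw [show -(M:ℝ) + 1 = -((M:ℝ)-1) from by ring] at h2
    rw [eq_div_iff (by simpa using hMc : -(M:ℝ) ≠ 0)]
    linear_combination h1 - h2
  have eD : poch (-(2*(J:ℝ)-2)) k
      = poch (-(2*(J:ℝ))) k * (-(2*(J:ℝ)) + k) * (-(2*(J:ℝ)) + k + 1)
        / ((2*(J:ℝ))*(2*(J:ℝ)-1)) := by
    have h := poch_shift2 (-(2*(J:ℝ))) k
    rw [show -(2*(J:ℝ)) + 2 = -(2*(J:ℝ)-2) from by ring] at h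
    rw [eq_div_iff hJJ]
    linear_combination h
  have eT : (-(y/2)*(y-1)) * poch (-(y-2)) k
      = -(1/2) * (poch (-y) k * (-y + k) * (-y + k + 1)) := by
    have h := poch_shift2 (-y) k
    rw [show -y + 2 = -(y-2) from by ring] at h
    linear_combination (-(1/2)) * h
  unfold uu rr
  have step : (-(y/2)*(y-1)) * (poch (-((M:ℝ)-1)) k * poch (-(y-2)) k /
      (poch (-(2*(J:ℝ)-2)) k * (Nat.factorial k : ℝ)) * 2^k)
    = poch (-((M:ℝ)-1)) k * (-(1/2) * (poch (-y) k * (-y + k) * (-y + k + 1))) /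
      (poch (-(2*(J:ℝ)-2)) k * (Nat.factorial k : ℝ)) * 2^k := by
    rw [← eT]; ring
  have hkR : (k:ℝ) ≤ 2*(J:ℝ) - 2 := by
    have : (k:ℝ) + 2 ≤ ((M:ℕ):ℝ) + 1 := by exact_mod_cast Nat.succ_le_succ hk
    have h2 : ((M:ℕ):ℝ) + 1 ≤ 2*(J:ℝ) := by exact_mod_cast hM2
    linarith
  have hz1 : -(2*(J:ℝ)) + (k:ℝ) ≠ 0 := by intro h; nlinarith
  have hz2 : -(2*(J:ℝ)) + (k:ℝ) + 1 ≠ 0 := by intro h; nlinarith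
  have hM0 : -(M:ℝ) ≠ 0 := by simpa using hMc
  rw [step, poch_succ (-(M:ℝ)), poch_succ (-y), poch_succ (-(2*(J:ℝ))), e4, eS, eD]
  have hJ0 : (J:ℝ) ≠ 0 := by linarith
  have h2J1 : 2*(J:ℝ) - 1 ≠ 0 := by linarith
  field_simp
  have hz1' : -((J:ℝ)*2) + (k:ℝ) ≠ 0 := by intro h; apply hz1; linarith
  have hz2' : -((J:ℝ)*2) + (k:ℝ) + 1 ≠ 0 := by intro h; apply hz2; linarith
  congr 1
  field_simp
  ring

lemma key (J M : ℕ) (y : ℝ) (hM1 : 1 ≤ M) (hM2 : M + 1 ≤ 2*J) :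
    ((J:ℝ)*(2*(J:ℝ)-1)) * kraw M y (1/2) (2*J)
      = (-(y/2)*(y-1)) * kraw (M-1) (y-2) (1/2) (2*J-2)
        + ((J:ℝ)-y/2)*(2*(J:ℝ)-y-1) * kraw (M-1) y (1/2) (2*J-2) := by
  have hJ1 : 1 ≤ J := by omega
  have hcM : ((M-1 : ℕ) : ℝ) = (M:ℝ) - 1 := by
    rw [Nat.cast_sub hM1, Nat.cast_one]
  have hc2J : ((2*J : ℕ) : ℝ) = 2*(J:ℝ) := by push_cast; ring
  have hc2J2 : ((2*J-2 : ℕ) : ℝ) = 2*(J:ℝ) - 2 := by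
    rw [Nat.cast_sub (by omega : 2 ≤ 2*J)]; push_cast; ring
  have hMc : (M:ℝ) ≠ 0 := by
    have : (1:ℝ) ≤ (M:ℝ) := by exact_mod_cast hM1
    linarith
  have EL : kraw M y (1/2) (2*J) = ∑ k ∈ Finset.range (M+1), uu M J y k := by
    unfold kraw uu
    apply Finset.sum_congr rfl
    intro k _
    rw [hc2J]
    norm_num
  have ER : (-(y/2)*(y-1)) * kraw (M-1) (y-2) (1/2) (2*J-2)
      + ((J:ℝ)-y/2)*(2*(J:ℝ)-y-1) * kraw (M-1) y (1/2) (2*J-2)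
      = ∑ k ∈ Finset.range M, rr M J y k := by
    unfold kraw rr
    rw [Nat.sub_add_cancel hM1, Finset.mul_sum, Finset.mul_sum, ← Finset.sum_add_distrib]
    apply Finset.sum_congr rfl
    intro k _
    rw [hcM, hc2J2]
    norm_num
  rw [EL, ER]
  apply mul_left_cancel₀ hMc
  have tsum : ∑ k ∈ Finset.range M, ((M:ℝ) * (((J:ℝ)*(2*(J:ℝ)-1)) * uu M J y k - rr M J y k))
      = ∑ k ∈ Finset.range M,
          ((fun i : ℕ => ((J:ℝ)*(2*(J:ℝ)-1)) * (i:ℝ) * uu M J y i) k - (fun i : ℕ => ((J:ℝ)*(2*(J:ℝ)-1)) * (i:ℝ) * uu M J y i) (k+1)) := by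
    apply Finset.sum_congr rfl
    intro k hk
    rw [Finset.mem_range] at hk
    have := tele_lemma J M k y hM1 hk hM2
    simp only []
    push_cast
    linear_combination this
  have A : ∑ k ∈ Finset.range M, ((M:ℝ) * (((J:ℝ)*(2*(J:ℝ)-1)) * uu M J y k - rr M J y k))
      = - (((J:ℝ)*(2*(J:ℝ)-1)) * (M:ℝ) * uu M J y M) := by
    rw [tsum, Finset.sum_range_sub' (fun i : ℕ => ((J:ℝ)*(2*(J:ℝ)-1)) * (i:ℝ) * uu M J y i) M]
    simp
  have B : ∑ k ∈ Finset.range M, ((M:ℝ) * (((J:ℝ)*(2*(J:ℝ)-1)) * uu M J y k - rr M J y k))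
      = (M:ℝ) * ((J:ℝ)*(2*(J:ℝ)-1)) * (∑ k ∈ Finset.range M, uu M J y k)
        - (M:ℝ) * (∑ k ∈ Finset.range M, rr M J y k) := by
    rw [Finset.mul_sum, Finset.mul_sum, ← Finset.sum_sub_distrib]
    exact Finset.sum_congr rfl (fun k _ => by ring)
  rw [Finset.sum_range_succ]
  linear_combination A - B

theorem stmt0 (j n x : ℤ) (hj : 1 ≤ j) (hn1 : 1 - j ≤ n) (hn2 : n ≤ j - 1)
    (hx1 : 0 ≤ x) (hx2 : x ≤ j - 1) :
    (j : ℝ) * (2 * (j : ℝ) - 1) * kraw (j + n).toNat (2 * ((x : ℝ) + 1)) (1/2) (2 * j).toNat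
      = -((x : ℝ) + 1) * (2 * (x : ℝ) + 1) *
          kraw (j + n - 1).toNat (2 * (x : ℝ)) (1/2) (2 * (j - 1)).toNat
        + ((j : ℝ) - (x : ℝ) - 1) * (2 * (j : ℝ) - 2 * (x : ℝ) - 3) *
          kraw (j + n - 1).toNat (2 * ((x : ℝ) + 1)) (1/2) (2 * (j - 1)).toNat := by
  set J := j.toNat with hJ
  set M := (j + n).toNat with hM
  have hJR : ((J : ℕ) : ℝ) = (j : ℝ) := by
    rw [hJ]
    rw [show ((j.toNat : ℕ) : ℝ) = ((j.toNat : ℤ) : ℝ) from by push_cast; ring]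
    rw [Int.toNat_of_nonneg (by omega)]
  have e1 : (2*j).toNat = 2*J := by omega
  have e2 : (j + n - 1).toNat = M - 1 := by omega
  have e3 : (2*(j-1)).toNat = 2*J - 2 := by omega
  have hM1 : 1 ≤ M := by omega
  have hM2 : M + 1 ≤ 2*J := by omega
  rw [e1, e2, e3]
  have hkey := key J M (2*((x:ℝ)+1)) hM1 hM2
  rw [hJR] at hkey
  rw [show 2*((x:ℝ)+1) - 2 = 2*(x:ℝ) from by ring] at hkey
  linear_combination hkey
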